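/- Let A be a real n×m matrix and let t ≥ 1 be a natural number such that every nonzero x ∈ Ker(A) satisfies ‖x‖₀ ≥ 2t+1. Then there exists a constant u > 0 such that ‖Az‖₂ ≥ u‖z‖₂ for every z ∈ ℝ^m with ‖z‖₀ ≤ 2t. -/

import Mathlib

/-- The number of nonzero entries of a vector (the "l0-norm"). -/
noncomputable def l0norm {m : ℕ} (x : Fin m → ℝ) : ℕ :=
  (Finset.univ.filter (fun i => x i ≠ 0)).card

/-- The Euclidean norm of a vector in `ℝ^k`. -/
noncomputable def l2norm {k : ℕ} (x : Fin k → ℝ) : ℝ :=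
  Real.sqrt (∑ i, (x i) ^ 2)

lemma l2norm_eq_norm {k : ℕ} (x : EuclideanSpace ℝ (Fin k)) : l2norm x = ‖x‖ := by
  rw [EuclideanSpace.norm_eq]
  simp [l2norm, Real.norm_eq_abs, sq_abs]

lemma l0norm_smul {k : ℕ} (c : ℝ) (hc : c ≠ 0) (x : Fin k → ℝ) :
    l0norm (c • x) = l0norm x := by
  unfold l0norm
  congr 1
  apply Finset.filter_congr
  intro i _
  simp [Pi.smul_apply, smul_eq_mul, mul_ne_zero_iff, hc]

lemma l2norm_smul {k : ℕ} (c : ℝ) (x : Fin k → ℝ) :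
    l2norm (c • x) = |c| * l2norm x := by
  unfold l2norm
  rw [← Real.sqrt_sq_eq_abs, ← Real.sqrt_mul (sq_nonneg c)]
  congr 1
  rw [Finset.mul_sum]
  apply Finset.sum_congr rfl
  intro i _
  simp [mul_pow]

lemma l0norm_smul' {k : ℕ} (c : ℝ) (hc : c ≠ 0) (x : EuclideanSpace ℝ (Fin k)) :
    l0norm (c • x) = l0norm x := l0norm_smul c hc x

/-- Lemma 1, existence part: if every nonzero kernel vector of `A` has at least
`2t+1` nonzero entries (`t ≥ 1`), then there is `u > 0` with `‖A z‖₂ ≥ u ‖z‖₂` for every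
`z` with `‖z‖₀ ≤ 2t`. -/
theorem stmt7 (n m : ℕ) (A : Matrix (Fin n) (Fin m) ℝ) (t : ℕ) (ht : 1 ≤ t)
    (hker : ∀ x : Fin m → ℝ, x ≠ 0 → A.mulVec x = 0 → 2 * t + 1 ≤ l0norm x) :
    ∃ u : ℝ, 0 < u ∧ ∀ z : Fin m → ℝ, l0norm z ≤ 2 * t →
      u * l2norm z ≤ l2norm (A.mulVec z) := by
  classical
  set E := EuclideanSpace ℝ (Fin m)
  set S : Set E := {z : E | l0norm z ≤ 2 * t ∧ ‖z‖ = 1} with hS_def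
  -- the sparsity set is closed
  have hclosed : IsClosed {z : E | l0norm z ≤ 2 * t} := by
    have heq : {z : E | l0norm z ≤ 2 * t} =
        ⋃ T ∈ {T : Finset (Fin m) | T.card ≤ 2 * t}, {z : E | ∀ i ∉ T, z i = 0} := by
      ext z
      simp only [Set.mem_setOf_eq, Set.mem_iUnion]
      constructor
      · intro hz
        refine ⟨Finset.univ.filter (fun i => z i ≠ 0), hz, ?_⟩
        intro i hi
        by_contra h
        exact hi (Finset.mem_filter.2 ⟨Finset.mem_univ i, h⟩)
      · rintro ⟨T, hT, hzT⟩
        refine le_trans ?_ hT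
        apply Finset.card_le_card
        intro i hi
        rw [Finset.mem_filter] at hi
        by_contra h
        exact hi.2 (hzT i h)
    rw [heq]
    apply Set.Finite.isClosed_biUnion (Set.toFinite _)
    intro T _
    have : {z : E | ∀ i ∉ T, z i = 0} = ⋂ i ∈ {i | i ∉ T}, {z : E | z i = 0} := by
      ext z; simp
    rw [this]
    apply isClosed_biInter
    intro i _
    exact isClosed_eq ((EuclideanSpace.proj i : E →L[ℝ] ℝ).continuous) continuous_const
  have hScompact : IsCompact S := by
    have : S = {z : E | l0norm z ≤ 2 * t} ∩ Metric.sphere (0 : E) 1 := by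
      ext z
      simp only [hS_def, Set.mem_setOf_eq, Set.mem_inter_iff, mem_sphere_iff_norm, mem_sphere_zero_iff_norm, sub_zero]
    rw [this]
    exact (isCompact_sphere (0 : E) 1).inter_left hclosed
  -- the objective function is continuous
  have hcont : Continuous (fun z : E => l2norm (A.mulVec z)) := by
    unfold l2norm
    apply Real.continuous_sqrt.comp
    apply continuous_finset_sum
    intro i _
    have h1 : Continuous (fun z : E => (A.mulVec z) i) := by
      unfold Matrix.mulVec dotProduct
      apply continuous_finset_sum
      intro j _
      exact continuous_const.mul ((EuclideanSpace.proj j : E →L[ℝ] ℝ).continuous)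
    exact h1.pow 2
  -- positivity of l2norm on nonzero vectors
  have hl2pos : ∀ {k : ℕ} (y : Fin k → ℝ), y ≠ 0 → 0 < l2norm y := by
    intro k y hy
    have := l2norm_eq_norm (WithLp.toLp 2 y : EuclideanSpace ℝ (Fin k))
    rw [WithLp.ofLp_toLp] at this
    rw [this]
    exact norm_pos_iff.2 (fun h => hy (by simpa using congrArg WithLp.ofLp h))
  have key : ∀ u : ℝ, 0 < u →
      (∀ w : Fin m → ℝ, l0norm w ≤ 2 * t → l2norm w = 1 → u ≤ l2norm (A.mulVec w)) →
      ∀ z : Fin m → ℝ, l0norm z ≤ 2 * t → u * l2norm z ≤ l2norm (A.mulVec z) := by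
    intro u hupos hmin z hz
    by_cases hzz : z = 0
    · subst hzz; simp [l2norm, Matrix.mulVec_zero]
    · have hzpos : 0 < l2norm z := hl2pos z hzz
      set c : ℝ := (l2norm z)⁻¹ with hc
      have hcpos : 0 < c := inv_pos.2 hzpos
      have h0 : l0norm (c • z) ≤ 2 * t := by
        rw [l0norm_smul c (ne_of_gt hcpos)]; exact hz
      have h1 : l2norm (c • z) = 1 := by
        rw [l2norm_smul, abs_of_pos hcpos]
        exact inv_mul_cancel₀ (ne_of_gt hzpos)
      have hle : u ≤ l2norm (A.mulVec (c • z)) := hmin _ h0 h1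
      have hsm : A.mulVec (c • z) = c • A.mulVec z := A.mulVec_smul c z
      rw [hsm, l2norm_smul, abs_of_pos hcpos] at hle
      have h2 : l2norm z * u ≤ l2norm z * (c * l2norm (A.mulVec z)) :=
        mul_le_mul_of_nonneg_left hle hzpos.le
      calc u * l2norm z = l2norm z * u := mul_comm _ _
        _ ≤ l2norm z * (c * l2norm (A.mulVec z)) := h2
        _ = l2norm (A.mulVec z) := by
            rw [hc, ← mul_assoc, mul_inv_cancel₀ (ne_of_gt hzpos), one_mul]
  by_cases hSne : S.Nonempty
  · obtain ⟨w, hwS, hwmin⟩ := hScompact.exists_isMinOn hSne hcont.continuousOn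
    set u := l2norm (A.mulVec w) with hu
    have hwne : w ≠ 0 := by
      intro h
      have h2 := hwS.2
      rw [h] at h2
      simp at h2
    have hupos : 0 < u := by
      apply hl2pos
      intro hAw
      have h1 := hker w (fun h => hwne (by simpa using congrArg (WithLp.toLp 2) h)) hAw
      have h2 := hwS.1
      omega
    refine ⟨u, hupos, key u hupos ?_⟩
    intro w' h0 h1
    have hw'E : (WithLp.toLp 2 w' : E) ∈ S := ⟨h0, by rw [← l2norm_eq_norm]; exact h1⟩
    exact hwmin hw'E
  · refine ⟨1, one_pos, key 1 one_pos ?_⟩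
    intro w' h0 h1
    exfalso
    exact hSne ⟨WithLp.toLp 2 w', h0, by rw [← l2norm_eq_norm]; exact h1⟩
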